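/- Let u and v be words over a set V of variables. The identity u = v holds in every commutative semigroup satisfying the identity x·x = x·x·x (i.e., in the variety C₂ = var{x² = x³, xy = yx}) if and only if c(u) = c(v) and every letter of c(u) is either simple in both u and v or multiple in both u and v. -/

import Mathlib

def evalWord {V S : Type*} [Mul S] (f : V → S) (w : List V) : Option S :=
  w.foldr (fun x o => some (o.elim (f x) (fun s => f x * s))) none

lemma evalWord_eq_prod {V S : Type*} [Semigroup S] (f : V → S) (w : List V) :
    (evalWord f w : Option S) = ((w.map (fun x => ((f x : WithOne S)))).prod : WithOne S) := by
  induction w with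
  | nil => rfl
  | cons x w ih =>
    show some ((evalWord f w).elim (f x) (fun s => f x * s))
        = (f x : WithOne S) * (w.map (fun x => ((f x : WithOne S)))).prod
    rw [ih]
    cases h : ((w.map (fun x => ((f x : WithOne S)))).prod : WithOne S) with
    | one => rfl
    | coe s => rfl

lemma pow_eq_sq {M : Type*} [Monoid M] (h : ∀ a : M, a * a = (a * a) * a)
    (a : M) : ∀ n, 2 ≤ n → a ^ n = a ^ 2 := by
  intro n hn
  induction n with
  | zero => omega
  | succ n ih =>
    rcases Nat.lt_or_ge n 2 with h2 | h2
    · interval_cases n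
      · omega
      · rfl
    · rw [pow_succ, ih h2, pow_two, ← h a, ← pow_two]

/-- The saturating-at-2 counting semigroup on ℕ. -/
def CapNat : Type := ℕ

def CapNat.ofN : ℕ → CapNat := id
def CapNat.toN : CapNat → ℕ := id

lemma CapNat.eq_of_toN {a b : CapNat} (h : a.toN = b.toN) : a = b := h

lemma CapNat.toN_ofN (n : ℕ) : (CapNat.ofN n).toN = n := rfl

instance : Semigroup CapNat where
  mul a b := .ofN (min (a.toN + b.toN) 2)
  mul_assoc a b c := by
    show CapNat.ofN (min (CapNat.toN (CapNat.ofN (min (a.toN + b.toN) 2)) + c.toN) 2)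
        = CapNat.ofN (min (a.toN + CapNat.toN (CapNat.ofN (min (b.toN + c.toN) 2))) 2)
    apply CapNat.eq_of_toN
    simp only [CapNat.toN_ofN]
    omega

lemma capnat_mul (a b : CapNat) : (a * b).toN = min (a.toN + b.toN) 2 := rfl

lemma capnat_comm (a b : CapNat) : a * b = b * a := by
  have h := capnat_mul a b
  have h' := capnat_mul b a
  have : (a*b).toN = (b*a).toN := by omega
  exact this

lemma capnat_sq (a : CapNat) : a * a = (a * a) * a := by
  have h := capnat_mul a a
  have h' := capnat_mul (a*a) a
  have : (a*a).toN = ((a*a)*a).toN := by omega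
  exact this

/-- evaluation of a word under the delta assignment computes capped counts. -/
lemma evalWord_delta {V : Type*} [DecidableEq V] (y : V) (w : List V) (hw : w ≠ []) :
    evalWord (fun x : V => (ULift.up (CapNat.ofN (if x = y then 1 else 0)) : ULift.{u} CapNat)) w
      = some (ULift.up (CapNat.ofN (min (w.count y) 2))) := by
  induction w with
  | nil => exact absurd rfl hw
  | cons x w ih =>
    rcases eq_or_ne w [] with rfl | hw'
    · show some _ = _
      simp only [evalWord, List.foldr, Option.elim]
      congr 2
      show CapNat.toN (CapNat.ofN (if x = y then 1 else 0))
          = CapNat.toN (CapNat.ofN (min (List.count y [x]) 2))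
      by_cases hxy : x = y <;> simp [hxy, List.count_cons, CapNat.ofN, CapNat.toN] <;> rfl
    · show some ((evalWord _ w).elim _ _) = _
      rw [ih hw']
      show some (_ * _) = _
      congr 1
      have hup : ∀ a b : CapNat, (ULift.up.{u} a * ULift.up.{u} b) = ULift.up (a * b) :=
        fun _ _ => rfl
      rw [hup]
      congr 1
      have : (CapNat.ofN (if x = y then 1 else 0) * CapNat.ofN (min (w.count y) 2)).toN
          = (CapNat.ofN (min ((x :: w).count y) 2)).toN := by
        rw [capnat_mul]
        show min (CapNat.toN (CapNat.ofN _) + CapNat.toN (CapNat.ofN _)) 2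
            = CapNat.toN (CapNat.ofN _)
        unfold CapNat.ofN CapNat.toN
        simp only [id]
        by_cases hxy : x = y <;> simp [hxy, List.count_cons] <;> omega
      exact this

theorem statement1 {V : Type*} [DecidableEq V] (u v : List V) (hu : u ≠ []) (hv : v ≠ []) :
    (∀ (S : Type*) [Semigroup S],
        (∀ a b : S, a * b = b * a) → (∀ a : S, a * a = (a * a) * a) →
        ∀ f : V → S, evalWord f u = evalWord f v) ↔
      (({x | x ∈ u} : Set V) = {x | x ∈ v} ∧
        ∀ x ∈ u, (u.count x = 1 ∧ v.count x = 1) ∨ (2 ≤ u.count x ∧ 2 ≤ v.count x)) := by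
  constructor
  · intro h
    have hcomm : ∀ a b : ULift.{u_2} CapNat, a * b = b * a := by
      rintro ⟨a⟩ ⟨b⟩
      exact congrArg ULift.up (capnat_comm a b)
    have hsq : ∀ a : ULift.{u_2} CapNat, a * a = (a * a) * a := by
      rintro ⟨a⟩
      exact congrArg ULift.up (capnat_sq a)
    have key2 : ∀ y : V, min (u.count y) 2 = min (v.count y) 2 := by
      intro y
      have key := h (ULift.{u_2} CapNat) hcomm hsq
        (fun x : V => ULift.up (CapNat.ofN (if x = y then 1 else 0)))
      rw [evalWord_delta y u hu, evalWord_delta y v hv] at key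
      exact congrArg (fun o => CapNat.toN o.down) (Option.some_injective _ key)
    have hmem : ∀ y : V, y ∈ u ↔ y ∈ v := by
      intro y
      rw [← List.count_pos_iff, ← List.count_pos_iff]
      have := key2 y; omega
    refine ⟨Set.ext fun y => hmem y, fun x hx => ?_⟩
    have := key2 x
    have hpos : 0 < u.count x := List.count_pos_iff.mpr hx
    omega
  · rintro ⟨hc, hcount⟩ S _ hcomm hsq f
    letI : CommMonoid (WithOne S) :=
      { (inferInstance : Monoid (WithOne S)) with
        mul_comm := by
          intro a b
          cases a with
          | one => simp
          | coe a =>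
            cases b with
            | one => simp
            | coe b =>
              simp only [← WithOne.coe_mul]
              exact congrArg _ (hcomm a b) }
    have hsq' : ∀ a : WithOne S, a * a = (a * a) * a := by
      intro a
      cases a with
      | one => simp
      | coe a =>
        simp only [← WithOne.coe_mul]
        exact congrArg _ (hsq a)
    rw [evalWord_eq_prod, evalWord_eq_prod]
    show ((u.map (fun x => ((f x : WithOne S)))).prod : WithOne S)
        = ((v.map (fun x => ((f x : WithOne S)))).prod : WithOne S)
    rw [Finset.prod_list_map_count, Finset.prod_list_map_count]
    have hfin : u.toFinset = v.toFinset := by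
      ext y
      simp only [List.mem_toFinset]
      exact Set.ext_iff.mp hc y
    rw [hfin]
    refine Finset.prod_congr rfl fun x hx => ?_
    have hxv : x ∈ v := List.mem_toFinset.mp hx
    have hxu : x ∈ u := (Set.ext_iff.mp hc x).mpr hxv
    rcases hcount x hxu with ⟨h1, h2⟩ | ⟨h1, h2⟩
    · rw [h1, h2]
    · rw [pow_eq_sq hsq' _ _ h1, pow_eq_sq hsq' _ _ h2]
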